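/- For all real γ > 0 and δ > 0 there exists a constant C > 0 such that for all ε ∈ (0,1), all N ≥ C·(1 + log(1/ε))/γ, and all T ≥ C·N·δ·(1 + log(1/ε))·(1/ε)^{δ/γ}, the following holds: if x : [0,T] → ℝ is differentiable with x(0) = 0 and x′(t) = exp(−Nδt/T)·(σ(γNt/T) − x(t)) for all t ∈ [0,T], where σ(t) = 1/(1 + exp(−t)), then σ(Nγ) − x(T) ≤ ε. -/

import Mathlib

/-- The logistic sigmoid function σ(t) = 1/(1 + exp(−t)). -/
noncomputable def logistic (t : ℝ) : ℝ := 1 / (1 + Real.exp (-t))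

lemma logistic_nonneg (t : ℝ) : 0 ≤ logistic t := by
  unfold logistic; positivity

lemma logistic_le_one (t : ℝ) : logistic t ≤ 1 := by
  unfold logistic
  rw [div_le_one (by positivity)]
  nlinarith [Real.exp_pos (-t)]

lemma logistic_lb (t : ℝ) : 1 - Real.exp (-t) ≤ logistic t := by
  unfold logistic
  rw [le_div_iff₀ (by positivity)]
  nlinarith [Real.exp_pos (-t), sq_nonneg (Real.exp (-t))]

lemma mono_aux {f f' : ℝ → ℝ} {s t : ℝ} (hst : s ≤ t)
    (hf : ∀ u ∈ Set.Icc s t, HasDerivAt f (f' u) u)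
    (h0 : ∀ u ∈ Set.Icc s t, 0 ≤ f' u) : f s ≤ f t := by
  have hmono : MonotoneOn f (Set.Icc s t) :=
    monotoneOn_of_deriv_nonneg (convex_Icc s t)
      (fun u hu => (hf u hu).continuousAt.continuousWithinAt)
      (fun u hu => (hf u (interior_subset hu)).differentiableAt.differentiableWithinAt)
      (fun u hu => by
        rw [(hf u (interior_subset hu)).deriv]; exact h0 u (interior_subset hu))
  exact hmono (Set.left_mem_Icc.2 hst) (Set.right_mem_Icc.2 hst) hst

lemma anti_aux {f f' : ℝ → ℝ} {s t : ℝ} (hst : s ≤ t)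
    (hf : ∀ u ∈ Set.Icc s t, HasDerivAt f (f' u) u)
    (h0 : ∀ u ∈ Set.Icc s t, f' u ≤ 0) : f t ≤ f s := by
  have h2 : -f s ≤ -f t := mono_aux hst (f := fun u => -f u) (f' := fun u => -(f' u))
    (fun u hu => (hf u hu).neg) (fun u hu => by simpa using h0 u hu)
  linarith

set_option maxHeartbeats 1000000 in
theorem stmt_14 (γ δ : ℝ) (hγ : 0 < γ) (hδ : 0 < δ) :
    ∃ C : ℝ, 0 < C ∧
      ∀ ε ∈ Set.Ioo (0:ℝ) 1,
      ∀ N : ℝ, N ≥ C * (1 + Real.log (1 / ε)) / γ →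
      ∀ T : ℝ, T ≥ C * N * δ * (1 + Real.log (1 / ε)) * (1 / ε) ^ (δ / γ) →
      ∀ x : ℝ → ℝ, x 0 = 0 →
        (∀ t ∈ Set.Icc (0:ℝ) T, HasDerivAt x
          (Real.exp (-(N * δ * t / T)) * (logistic (γ * N * t / T) - x t)) t) →
        logistic (N * γ) - x T ≤ ε := by
  refine ⟨2 * (2:ℝ) ^ (δ/γ) + γ/δ + 1, by positivity, ?_⟩
  set C : ℝ := 2 * (2:ℝ) ^ (δ/γ) + γ/δ + 1 with hCdef
  rintro ε ⟨hε0, hε1⟩ N hN T hT x hx0 hx'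
  have hCpos : 0 < C := by positivity
  have h1ε : (1:ℝ) < 1/ε := one_lt_one_div hε0 hε1
  have h1εpos : (0:ℝ) < 1/ε := by positivity
  have hlog : 0 < Real.log (1/ε) := Real.log_pos h1ε
  set L : ℝ := 1 + Real.log (1/ε) with hLdef
  have hL1 : 1 ≤ L := by rw [hLdef]; linarith
  have hLpos : 0 < L := by linarith
  set L2 : ℝ := Real.log 2 + Real.log (1/ε) with hL2def
  have hlog2pos : 0 < Real.log 2 := Real.log_pos one_lt_two
  have hlog2le : Real.log 2 ≤ 1 := by
    have := Real.log_le_sub_one_of_pos (show (0:ℝ) < 2 by norm_num)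
    linarith
  have hL2pos : 0 < L2 := by positivity
  have hL2L : L2 ≤ L := by simp only [hL2def, hLdef]; linarith
  -- C ≥ useful constants
  have hrpow2 : (2:ℝ) ^ (δ/γ) = Real.exp (Real.log 2 * (δ/γ)) :=
    Real.rpow_def_of_pos (by norm_num) _
  have hC1 : 1 + γ/δ ≤ C := by
    have : (0:ℝ) < (2:ℝ) ^ (δ/γ) := by positivity
    simp only [hCdef]; linarith
  have hC2 : 2 * Real.exp (Real.log 2 * (δ/γ)) ≤ C := by
    have : (0:ℝ) < γ/δ := by positivity
    simp only [hCdef, hrpow2]; linarith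
  have hNpos : 0 < N := lt_of_lt_of_le (by positivity) hN
  have hTpos : 0 < T := by
    refine lt_of_lt_of_le ?_ hT
    have : (0:ℝ) < (1/ε) ^ (δ/γ) := by positivity
    positivity
  have hTne : T ≠ 0 := ne_of_gt hTpos
  have hNne : N ≠ 0 := ne_of_gt hNpos
  have hNδpos : 0 < N * δ := by positivity
  -- t₀
  set t₀ : ℝ := T * L2 / (γ * N) with ht₀def
  have ht₀pos : 0 < t₀ := by positivity
  have hγNL2 : L2 ≤ γ * N := by
    have h1 : C * L / γ ≤ N := hN
    have : C * L ≤ γ * N := by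
      rw [div_le_iff₀ hγ] at h1; linarith
    have h2p : (0:ℝ) < (2:ℝ)^(δ/γ) := by positivity
    have hCge1 : (1:ℝ) ≤ C := by rw [hCdef]; linarith [div_pos hγ hδ]
    have hCL : L ≤ C * L := le_mul_of_one_le_left hLpos.le hCge1
    linarith
  have ht₀T : t₀ ≤ T := by
    rw [ht₀def, div_le_iff₀ (by positivity)]
    linarith [mul_le_mul_of_nonneg_left hγNL2 hTpos.le]
  have hkey1 : N * δ * t₀ / T = δ / γ * L2 := by
    rw [ht₀def]; field_simp
  have hkey2 : γ * N * t₀ / T = L2 := by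
    rw [ht₀def]; field_simp
  -- exp(-L2) = ε/2
  have hexpL2 : Real.exp (-L2) = ε / 2 := by
    rw [hL2def, neg_add, Real.exp_add, Real.exp_neg, Real.exp_neg,
      Real.exp_log (show (0:ℝ) < 2 by norm_num), Real.exp_log h1εpos]
    field_simp
  -- the integrating factor A
  set A : ℝ → ℝ := fun u => -(T/(N*δ)) * Real.exp (-(N*δ*u/T)) with hAdef
  have hA : ∀ t : ℝ, HasDerivAt A (Real.exp (-(N*δ*t/T))) t := by
    intro t
    have h1 : HasDerivAt (fun u : ℝ => -(N*δ*u/T)) (-(N*δ/T)) t := by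
      have := (((hasDerivAt_id t).const_mul (N*δ)).div_const T).neg
      simp only [mul_one] at this
      exact this
    have h2 := (h1.exp).const_mul (-(T/(N*δ)))
    refine h2.congr_deriv ?_
    field_simp
  have hexpA : ∀ t : ℝ, HasDerivAt (fun u => Real.exp (A u))
      (Real.exp (A t) * Real.exp (-(N*δ*t/T))) t := fun t => (hA t).exp
  -- Step 1: x t₀ ≥ 0
  have hxt₀ : 0 ≤ x t₀ := by
    have hmono : x 0 * Real.exp (A 0) ≤ x t₀ * Real.exp (A t₀) := by
      apply mono_aux (f := fun u => x u * Real.exp (A u))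
        (f' := fun u => Real.exp (A u) * Real.exp (-(N*δ*u/T)) * logistic (γ*N*u/T))
        (le_of_lt ht₀pos)
      · intro u hu
        have hu' : u ∈ Set.Icc (0:ℝ) T := ⟨hu.1, le_trans hu.2 ht₀T⟩
        have := (hx' u hu').mul (hexpA u)
        refine this.congr_deriv ?_
        ring
      · intro u hu
        have h1 := logistic_nonneg (γ*N*u/T)
        positivity
    rw [hx0, zero_mul] at hmono
    exact (mul_nonneg_iff_of_pos_right (Real.exp_pos (A t₀))).1 hmono
  -- Step 2: contraction on [t₀, T]
  have hganti : (1 - ε/2 - x T) * Real.exp (A T) ≤ (1 - ε/2 - x t₀) * Real.exp (A t₀) := by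
    apply anti_aux (f := fun u => (1 - ε/2 - x u) * Real.exp (A u))
      (f' := fun u => Real.exp (A u) * Real.exp (-(N*δ*u/T)) * (1 - ε/2 - logistic (γ*N*u/T)))
      ht₀T
    · intro u hu
      have hu' : u ∈ Set.Icc (0:ℝ) T := ⟨le_trans ht₀pos.le hu.1, hu.2⟩
      have := (HasDerivAt.const_sub (1 - ε/2) (hx' u hu')).mul (hexpA u)
      refine this.congr_deriv ?_
      ring
    · intro u hu
      have hL2u : L2 ≤ γ*N*u/T := by
        rw [← hkey2]
        gcongr
        exact hu.1
      have hexp : Real.exp (-(γ*N*u/T)) ≤ ε/2 := by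
        rw [← hexpL2]
        exact Real.exp_le_exp.2 (by linarith)
      have hlb := logistic_lb (γ*N*u/T)
      have h1 : 1 - ε/2 - logistic (γ*N*u/T) ≤ 0 := by linarith
      have h2 : 0 ≤ Real.exp (A u) * Real.exp (-(N*δ*u/T)) := by positivity
      exact mul_nonpos_of_nonneg_of_nonpos h2 h1
  have h3 : (1 - ε/2 - x t₀) * Real.exp (A t₀) ≤ Real.exp (A t₀) := by
    apply mul_le_of_le_one_left (Real.exp_pos (A t₀)).le
    linarith
  -- Step 3: the key quantitative bound
  set E0 : ℝ := Real.exp (-(δ / γ * L2)) with hE0def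
  set ET : ℝ := Real.exp (-(N * δ)) with hETdef
  have hE0pos : 0 < E0 := Real.exp_pos _
  have hkey3 : N * δ * T / T = N * δ := by field_simp
  have hAt₀ : A t₀ = -(T/(N*δ)) * E0 := by
    simp only [hAdef]
    rw [hkey1]
  have hAT : A T = -(T/(N*δ)) * ET := by
    simp only [hAdef]
    rw [hkey3]
  -- sub-step A : ET ≤ E0 / 2
  have hδγ : 0 < δ/γ := by positivity
  have hNδlb : δ / γ * L2 + Real.log 2 ≤ N * δ := by
    have hA0 : C * L / γ * δ ≤ N * δ := mul_le_mul_of_nonneg_right hN hδ.le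
    have hA1 : (1 + γ/δ) * (L * (δ/γ)) ≤ C * (L * (δ/γ)) :=
      mul_le_mul_of_nonneg_right hC1 (by positivity)
    have hA2 : (1 + γ/δ) * (L * (δ/γ)) = L * (δ/γ) + L := by
      field_simp
    have hA3 : L2 * (δ/γ) ≤ L * (δ/γ) := mul_le_mul_of_nonneg_right hL2L hδγ.le
    have hA4 : C * L / γ * δ = C * (L * (δ/γ)) := by ring
    linarith
  have hET : ET ≤ E0 / 2 := by
    have h1 : Real.exp (-(N*δ)) ≤ Real.exp (-(δ / γ * L2) - Real.log 2) :=
      Real.exp_le_exp.2 (by linarith)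
    rw [Real.exp_sub, Real.exp_log (show (0:ℝ) < 2 by norm_num)] at h1
    exact h1
  -- sub-step B : 2 * (N*δ) * L2 ≤ T * E0
  have hrw : (1/ε) ^ (δ/γ) = Real.exp (Real.log (1/ε) * (δ/γ)) :=
    Real.rpow_def_of_pos h1εpos _
  have hprod : Real.exp (Real.log (1/ε) * (δ/γ)) * E0 = Real.exp (-(Real.log 2 * (δ/γ))) := by
    rw [hE0def, ← Real.exp_add]
    congr 1
    rw [hL2def]
    ring
  have hCE : (2:ℝ) ≤ C * Real.exp (-(Real.log 2 * (δ/γ))) := by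
    have h := mul_le_mul_of_nonneg_right hC2 (Real.exp_pos (-(Real.log 2 * (δ/γ)))).le
    have h2 : 2 * Real.exp (Real.log 2 * (δ/γ)) * Real.exp (-(Real.log 2 * (δ/γ))) = 2 := by
      rw [mul_assoc, ← Real.exp_add]
      simp
    linarith
  have hTE : 2 * (N*δ) * L2 ≤ T * E0 := by
    have h1 : C*N*δ*L*((1/ε)^(δ/γ)) * E0 ≤ T * E0 :=
      mul_le_mul_of_nonneg_right hT hE0pos.le
    rw [hrw] at h1
    have h2 : C*N*δ*L*(Real.exp (Real.log (1/ε) * (δ/γ))) * E0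
        = (C * Real.exp (-(Real.log 2 * (δ/γ)))) * (N*δ*L) := by
      rw [show C*N*δ*L*(Real.exp (Real.log (1/ε) * (δ/γ))) * E0
        = C * (Real.exp (Real.log (1/ε) * (δ/γ)) * E0) * (N*δ*L) from by ring, hprod]
    rw [h2] at h1
    have h3 : 2 * (N*δ*L) ≤ (C * Real.exp (-(Real.log 2 * (δ/γ)))) * (N*δ*L) :=
      mul_le_mul_of_nonneg_right hCE (by positivity)
    have h4 : 2 * (N*δ) * L2 ≤ 2 * (N*δ*L) := by
      linarith [mul_le_mul_of_nonneg_left hL2L (show (0:ℝ) ≤ 2*(N*δ) by positivity)]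
    exact le_trans h4 (le_trans h3 h1)
  -- combine
  have hL2le : L2 ≤ (T/(N*δ)) * (E0 - ET) := by
    have h5 : L2 ≤ (T/(N*δ)) * (E0/2) := by
      rw [div_mul_eq_mul_div, le_div_iff₀ hNδpos]
      clear_value L2 E0 ET
      linarith [hTE]
    have h6 : (T/(N*δ)) * (E0/2) ≤ (T/(N*δ)) * (E0 - ET) := by
      have hhalf : E0/2 ≤ E0 - ET := by clear_value E0 ET; linarith
      exact mul_le_mul_of_nonneg_left hhalf (div_pos hTpos hNδpos).le
    clear_value L2 E0 ET
    linarith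
  have hgoal2 : A t₀ ≤ A T - L2 := by
    rw [hAt₀, hAT]
    have hexpand : (T/(N*δ)) * (E0 - ET) = (T/(N*δ)) * E0 - (T/(N*δ)) * ET := by ring
    rw [hexpand] at hL2le
    clear_value L2 E0 ET
    linarith
  have hKEY : Real.exp (A t₀) ≤ ε/2 * Real.exp (A T) := by
    have h7 := Real.exp_le_exp.2 hgoal2
    rw [Real.exp_sub] at h7
    have h8 : Real.exp (A T) / Real.exp L2 = ε/2 * Real.exp (A T) := by
      rw [div_eq_mul_inv, ← Real.exp_neg, hexpL2]
      ring
    linarith [h8 ▸ h7]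
  have hfinal : 1 - ε/2 - x T ≤ ε/2 := by
    have h9 : (1 - ε/2 - x T) * Real.exp (A T) ≤ (ε/2) * Real.exp (A T) :=
      le_trans hganti (le_trans h3 hKEY)
    exact le_of_mul_le_mul_right h9 (Real.exp_pos _)
  have h10 := logistic_le_one (N*γ)
  linarith
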